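/- Let G ∈ ℝ^{n×K}, U₀ ∈ ℝ^{n×K} with U₀ᵀU₀ = I_K, and define the skew-symmetric matrix W = GU₀ᵀ − U₀Gᵀ. Then the directional derivative ⟨−WU₀, G⟩ = −(1/2)‖GU₀ᵀ − U₀Gᵀ‖_F² ≤ 0, where ⟨A,B⟩ = trace(AᵀB). -/

import Mathlib

open Matrix

theorem curvilinear_descent_direction (n K : ℕ)
    (G U₀ : Matrix (Fin n) (Fin K) ℝ) (hU₀ : U₀ᵀ * U₀ = 1) :
    let W := G * U₀ᵀ - U₀ * Gᵀ
    Matrix.trace ((-(W * U₀))ᵀ * G) =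
      -(1 / 2) * ∑ i, ∑ j, ((G * U₀ᵀ - U₀ * Gᵀ) i j) ^ 2 ∧
    Matrix.trace ((-(W * U₀))ᵀ * G) ≤ 0 := by
  intro W
  set A := G * U₀ᵀ with hA
  have hW : Wᵀ = -W := by
    show (A - U₀ * Gᵀ)ᵀ = -(A - U₀ * Gᵀ)
    have : U₀ * Gᵀ = Aᵀ := by simp [hA, transpose_mul]
    rw [this, transpose_sub, transpose_transpose]
    abel
  have hWA : W * Aᵀ = (A - Aᵀ) * Aᵀ := by
    have : U₀ * Gᵀ = Aᵀ := by simp [hA, transpose_mul]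
    simp [W, this]
    rfl
  -- trace identities
  have hT1 : trace ((-(W * U₀))ᵀ * G) = trace (W * A) := by
    rw [transpose_neg, transpose_mul, hW, Matrix.mul_neg, Matrix.neg_mul,
      trace_neg, Matrix.neg_mul, trace_neg, neg_neg, Matrix.mul_assoc,
      trace_mul_comm, ← Matrix.mul_assoc]
  have hWAt : trace (W * Aᵀ) = -trace (W * A) := by
    have h1 : trace (W * Aᵀ) = trace ((W * Aᵀ)ᵀ) := (trace_transpose _).symm
    rw [h1, transpose_mul, transpose_transpose, hW, Matrix.mul_neg, trace_neg,
      trace_mul_comm]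
  have hWU : U₀ * Gᵀ = Aᵀ := by simp [hA, transpose_mul]
  have hTW : trace (Wᵀ * W) = -2 * trace (W * A) := by
    rw [hW, Matrix.neg_mul, trace_neg]
    have : W * W = W * A - W * Aᵀ := by
      rw [← Matrix.mul_sub]; congr 1
      show W = A - Aᵀ
      rw [← hWU]
    rw [this, trace_sub, hWAt]
    ring
  have hsum : ∑ i, ∑ j, ((G * U₀ᵀ - U₀ * Gᵀ) i j) ^ 2 = trace (Wᵀ * W) := by
    simp only [trace, diag, Matrix.mul_apply, transpose_apply, Finset.sum_congr]
    rw [Finset.sum_comm]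
    apply Finset.sum_congr rfl; intro i _
    apply Finset.sum_congr rfl; intro j _
    rw [sq]
  have hmain : trace ((-(W * U₀))ᵀ * G) =
      -(1 / 2) * ∑ i, ∑ j, ((G * U₀ᵀ - U₀ * Gᵀ) i j) ^ 2 := by
    rw [hT1, hsum, hTW]; ring
  refine ⟨hmain, ?_⟩
  rw [hmain]
  have : (0:ℝ) ≤ ∑ i, ∑ j, ((G * U₀ᵀ - U₀ * Gᵀ) i j) ^ 2 :=
    Finset.sum_nonneg fun i _ => Finset.sum_nonneg fun j _ => sq_nonneg _
  nlinarith
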